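/- If for some abstract state ŝ every non-starving value M is excluded (i.e., (ŝ, M) ∈ E for all non-starving M, where E only contains pairs shown to lead to abstract counterexamples), then for every fair composition function f' whose abstraction satisfies the safety and coverage conditions, ŝ is unreachable in the abstraction of T^{f'} from the abstract pre-condition. -/
import Mathlib


/-- Abstraction mapping a composed state to the valuation of predicates it satisfies. -/
def alphaMap {X ι : Type*} (pred : ι → Set X) (x : X) : ι → Prop :=
  fun i => x ∈ pred i

/-- Transition relation of the composed system `T^g`, for a (possibly partial)
composition function `g` over abstract states; `g v = ∅` means `g` is undefined at
`v`. -/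
def compStepA {S ι : Type*} {k : ℕ} (pred : ι → Set (Fin k → S)) (R : S → S → Prop)
    (g : (ι → Prop) → Finset (Fin k)) (x x' : Fin k → S) : Prop :=
  (∀ i ∈ g (alphaMap pred x), R (x i) (x' i)) ∧
    ∀ i ∉ g (alphaMap pred x), x' i = x i

/-- Abstract transition relation of `T^g` under predicate abstraction. -/
def absTransA {S ι : Type*} {k : ℕ} (pred : ι → Set (Fin k → S)) (R : S → S → Prop)
    (g : (ι → Prop) → Finset (Fin k)) (v₁ v₂ : ι → Prop) : Prop :=
  ∃ x₁ x₂ : Fin k → S, alphaMap pred x₁ = v₁ ∧ alphaMap pred x₂ = v₂ ∧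
    compStepA pred R g x₁ x₂

/-- Suppose every non-starving value `M` is excluded for the abstract
state `sh` (i.e. `(sh, M) ∈ E` for all non-starving `M`), where `E` satisfies the
invariant that each excluded pair leads to an abstract counterexample (to safety S1 or
coverage S2) for any composition function taking that value.  Then for every fair
composition function `g` whose abstraction satisfies the safety and coverage
conditions, `sh` is unreachable in the abstraction of `T^g` from the abstract
pre-condition. -/
theorem all_values_excluded_implies_unreachable {S ι : Type*} {k : ℕ}
    (pred : ι → Set (Fin k → S)) (R : S → S → Prop) (F : Set S)
    (preA safeA : Set (ι → Prop)) (FA : Fin k → Set (ι → Prop))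
    (hFA : ∀ (x : Fin k → S) (i : Fin k), x i ∈ F ↔ alphaMap pred x ∈ FA i)
    (E : Set ((ι → Prop) × Finset (Fin k))) (sh : ι → Prop)
    (hE : ∀ p ∈ E, ∀ g : (ι → Prop) → Finset (Fin k), g p.1 = p.2 →
      (∃ v₀ ∈ preA, Relation.ReflTransGen (absTransA pred R g) v₀ p.1) →
      ∃ v₀ ∈ preA, ∃ t, Relation.ReflTransGen (absTransA pred R g) v₀ t ∧
        (t ∉ safeA ∨ g t = ∅))
    (hall : ∀ M : Finset (Fin k), M.Nonempty →
      ((∃ i, sh ∉ FA i) → ∃ j ∈ M, sh ∉ FA j) → (sh, M) ∈ E) :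
    ∀ g : (ι → Prop) → Finset (Fin k),
      (∀ v : ι → Prop, (g v).Nonempty → (∃ i, v ∉ FA i) → ∃ j ∈ g v, v ∉ FA j) →
      (∀ t : ι → Prop, (∃ v₀ ∈ preA, Relation.ReflTransGen (absTransA pred R g) v₀ t) →
        t ∈ safeA ∧ (g t).Nonempty) →
      ¬ ∃ v₀ ∈ preA, Relation.ReflTransGen (absTransA pred R g) v₀ sh := by
  intro g hfair hsafe hreach
  have hne : (g sh).Nonempty := (hsafe sh hreach).2
  have hmem : (sh, g sh) ∈ E := hall (g sh) hne (hfair sh hne)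
  obtain ⟨v₀, hv₀, t, ht, hbad⟩ := hE _ hmem g rfl hreach
  have := hsafe t ⟨v₀, hv₀, ht⟩
  rcases hbad with h | h
  · exact h this.1
  · exact absurd this.2 (by simp [h])
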